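/- Every n-dimensional locally compact separable metric space admits a closed topological embedding into ℝ^{2n+2}. -/

import Mathlib

open Set

/-- `CovDimLE X n`: the Lebesgue covering dimension of `X` is at most `n`, i.e. every open cover
admits an open refinement (still a cover) of order at most `n + 1`. -/
def CovDimLE (X : Type*) [TopologicalSpace X] (n : ℕ) : Prop :=
  ∀ 𝒰 : Set (Set X), (∀ U ∈ 𝒰, IsOpen U) → ⋃₀ 𝒰 = univ →
    ∃ 𝒱 : Set (Set X), (∀ V ∈ 𝒱, IsOpen V) ∧ ⋃₀ 𝒱 = univ ∧
      (∀ V ∈ 𝒱, ∃ U ∈ 𝒰, V ⊆ U) ∧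
      ∀ x : X, {V ∈ 𝒱 | x ∈ V}.encard ≤ (n : ℕ∞) + 1

open MeasureTheory

lemma exists_avoid {d : ℕ} (hd : 0 < d) {m : ℕ} (prev : Fin m → (Fin d → ℝ))
    (c₀ : Fin d → ℝ) {δ₀ : ℝ} (hδ₀ : 0 < δ₀) :
    ∃ p : Fin d → ℝ, dist p c₀ < δ₀ ∧
      ∀ t : Finset (Fin m), t.card ≤ d → p ∉ affineSpan ℝ (prev '' ↑t) := by
  classical
  have hspan : ∀ t : Finset (Fin m), t.card ≤ d → affineSpan ℝ (prev '' ↑t) ≠ ⊤ := by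
    intro t ht htop
    rcases t.eq_empty_or_nonempty with rfl | hne
    · have h0 : (0 : Fin d → ℝ) ∈ affineSpan ℝ (prev '' ↑(∅ : Finset (Fin m))) := by
        rw [htop]; trivial
      rw [Finset.coe_empty, Set.image_empty, AffineSubspace.span_empty] at h0
      exact (AffineSubspace.notMem_bot ℝ (Fin d → ℝ) (0 : Fin d → ℝ)) h0
    · have h1 : vectorSpan ℝ (prev '' ↑t) = ⊤ := by
        rw [← direction_affineSpan, htop, AffineSubspace.direction_top]
      have h2 := finrank_vectorSpan_image_finset_le ℝ prev t
        (Nat.succ_pred_eq_of_pos hne.card_pos).symm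
      rw [Finset.coe_image, h1, finrank_top, Module.finrank_fin_fun] at h2
      have := hne.card_pos
      rw [Nat.pred_eq_sub_one] at h2
      omega
  set bad : Set (Fin d → ℝ) :=
    ⋃ t ∈ {t : Finset (Fin m) | t.card ≤ d}, (affineSpan ℝ (prev '' ↑t) : Set (Fin d → ℝ))
    with hbad
  have hnull : volume bad = 0 := by
    refine (measure_biUnion_null_iff (Set.to_countable _)).2 ?_
    intro t ht
    exact Measure.addHaar_affineSubspace _ _ (hspan t ht)
  have hpos : 0 < volume (Metric.ball c₀ δ₀) := Metric.measure_ball_pos _ _ hδ₀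
  have hns : ¬ Metric.ball c₀ δ₀ ⊆ bad := fun hsub =>
    absurd (le_trans (measure_mono hsub) hnull.le) (by simpa using hpos.ne')
  obtain ⟨p, hp1, hp2⟩ := Set.not_subset.1 hns
  exact ⟨p, Metric.mem_ball.1 hp1, fun t ht hmem =>
    hp2 (Set.mem_biUnion (show t ∈ {t : Finset (Fin m) | t.card ≤ d} from ht) hmem)⟩

lemma exists_genPos (d : ℕ) (hd : 0 < d) (c : ℕ → Fin d → ℝ) (δ : ℕ → ℝ) (hδ : ∀ m, 0 < δ m) :
    ∃ Q : ℕ → Fin d → ℝ, (∀ m, dist (Q m) (c m) < δ m) ∧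
      ∀ (s : Finset ℕ) (w : ℕ → ℝ), s.card ≤ d + 1 → (∑ i ∈ s, w i) = 0 →
        (∑ i ∈ s, w i • Q i) = 0 → ∀ i ∈ s, w i = 0 := by
  classical
  let step : ∀ m, (Fin m → Fin d → ℝ) → (Fin d → ℝ) := fun m prev =>
    (exists_avoid hd prev (c m) (hδ m)).choose
  let A : ∀ m, Fin m → Fin d → ℝ := fun m =>
    Nat.rec (fun i => i.elim0) (fun m prev => Fin.snoc prev (step m prev)) m
  have hA : ∀ m, A (m + 1) = Fin.snoc (A m) (step m (A m)) := fun m => rfl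
  set Q : ℕ → Fin d → ℝ := fun m => A (m + 1) (Fin.last m) with hQ
  have hQA : ∀ m, Q m = step m (A m) := by
    intro m; rw [hQ]; simp only [hA, Fin.snoc_last]
  have hcompat : ∀ m (i : Fin m), A (m + 1) i.castSucc = A m i := by
    intro m i; simp only [hA, Fin.snoc_castSucc]
  have hAQ : ∀ (k) (i : Fin k), A k i = Q (i : ℕ) := by
    intro k
    induction k with
    | zero => exact fun i => i.elim0
    | succ k ih =>
      intro i
      refine Fin.lastCases ?_ ?_ i
      · rw [hQ]; simp only [Fin.val_last]
      · intro j
        rw [hcompat k j, ih j]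
        simp only [Fin.coe_castSucc]
  have hQav : ∀ m (s : Finset ℕ), (∀ j ∈ s, j < m) → s.card ≤ d →
      Q m ∉ affineSpan ℝ (Q '' ↑s) := by
    intro m s hs hcard
    have spec := (exists_avoid hd (A m) (c m) (hδ m)).choose_spec
    have h2 := spec.2 (s.attachFin hs) (by rw [Finset.card_attachFin]; exact hcard)
    have himg : A m '' ↑(s.attachFin hs) = Q '' ↑s := by
      ext p
      constructor
      · rintro ⟨i, hi, rfl⟩
        rw [Finset.mem_coe, Finset.mem_attachFin] at hi
        exact ⟨(i : ℕ), hi, (hAQ m i).symm⟩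
      · rintro ⟨j, hj, rfl⟩
        rw [Finset.mem_coe] at hj
        refine ⟨⟨j, hs j hj⟩, ?_, hAQ m ⟨j, hs j hj⟩⟩
        rw [Finset.mem_coe, Finset.mem_attachFin]
        exact hj
    rw [himg] at h2
    rw [hQA m]
    exact h2
  have hQdist : ∀ m, dist (Q m) (c m) < δ m := by
    intro m
    rw [hQA m]
    exact (exists_avoid hd (A m) (c m) (hδ m)).choose_spec.1
  refine ⟨Q, hQdist, ?_⟩
  have main : ∀ (N : ℕ) (s : Finset ℕ) (w : ℕ → ℝ), s.card = N → s.card ≤ d + 1 →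
      (∑ i ∈ s, w i) = 0 → (∑ i ∈ s, w i • Q i) = 0 → ∀ i ∈ s, w i = 0 := by
    intro N
    induction N with
    | zero =>
      intro s w hN _ _ _ i hi
      rw [Finset.card_eq_zero.1 hN] at hi
      simp at hi
    | succ N ih =>
      intro s w hN hcard hw0 hwQ i hi
      have hne : s.Nonempty := Finset.card_pos.1 (by omega)
      set m := s.max' hne with hm
      have hms : m ∈ s := s.max'_mem hne
      have herase : ∀ j ∈ s.erase m, j < m := by
        intro j hj
        rcases Finset.mem_erase.1 hj with ⟨hne', hj'⟩
        exact lt_of_le_of_ne (s.le_max' j hj') hne'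
      have hcarde : (s.erase m).card = N := by
        rw [Finset.card_erase_of_mem hms]; omega
      have hsum1 : ∑ j ∈ s.erase m, w j + w m = 0 := by
        rw [Finset.sum_erase_add s w hms]; exact hw0
      have hsum2 : ∑ j ∈ s.erase m, w j • Q j + w m • Q m = 0 := by
        rw [Finset.sum_erase_add s _ hms]; exact hwQ
      have hwm : w m = 0 := by
        by_contra hwm
        set u : ℕ → ℝ := fun j => -w j / w m with hu
        have hsneg : ∑ j ∈ s.erase m, -w j = w m := by
          rw [Finset.sum_neg_distrib]; linarith
        have hu1 : ∑ j ∈ s.erase m, u j = 1 := by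
          rw [hu]
          simp only
          rw [← Finset.sum_div, hsneg, div_self hwm]
        have huQ : ∑ j ∈ s.erase m, u j • Q j = Q m := by
          have h3 : ∑ j ∈ s.erase m, u j • Q j = (-(1:ℝ) / w m) • ∑ j ∈ s.erase m, w j • Q j := by
            rw [Finset.smul_sum]
            refine Finset.sum_congr rfl fun j _ => ?_
            rw [smul_smul, hu]
            congr 1
            field_simp
          rw [h3]
          have h4 : ∑ j ∈ s.erase m, w j • Q j = -(w m • Q m) :=
            eq_neg_of_add_eq_zero_left hsum2
          rw [h4, smul_neg, smul_smul]
          rw [show -(1:ℝ) / w m * w m = -1 by field_simp]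
          simp
        have hmem : Q m ∈ affineSpan ℝ (Q '' ↑(s.erase m)) := by
          have hsum : ∑ j ∈ (Finset.univ : Finset (s.erase m : Finset ℕ)), u (j : ℕ) = 1 := by
            rw [Finset.sum_coe_sort (s.erase m) (fun j => u j)]; exact hu1
          have h5 := affineCombination_mem_affineSpan (k := ℝ) hsum
            (fun j : (s.erase m : Finset ℕ) => Q (j : ℕ))
          rw [Finset.affineCombination_eq_linear_combination _ _ _ hsum] at h5
          have hrange : (Set.range fun j : (s.erase m : Finset ℕ) => Q (j : ℕ))
              = Q '' ↑(s.erase m) := by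
            ext p
            constructor
            · rintro ⟨j, rfl⟩
              exact ⟨(j : ℕ), Finset.mem_coe.2 j.2, rfl⟩
            · rintro ⟨j, hj, rfl⟩
              exact ⟨⟨j, Finset.mem_coe.1 hj⟩, rfl⟩
          have hlin : ∑ j ∈ (Finset.univ : Finset (s.erase m : Finset ℕ)),
              u (j : ℕ) • Q (j : ℕ) = Q m := by
            rw [Finset.sum_coe_sort (s.erase m) (fun j => u j • Q j)]; exact huQ
          rw [hlin, hrange] at h5
          exact h5
        exact hQav m (s.erase m) herase (by omega) hmem
      rcases eq_or_ne i m with rfl | him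
      · exact hwm
      · refine ih (s.erase m) w hcarde (by omega) ?_ ?_ i (Finset.mem_erase.2 ⟨him, hi⟩)
        · rw [hwm] at hsum1; linarith
        · rw [hwm] at hsum2; simpa using hsum2
  exact fun s w h1 h2 h3 => main s.card s w rfl h1 h2 h3


lemma exists_proper_real (X : Type*) [MetricSpace X] [SecondCountableTopology X]
    [LocallyCompactSpace X] :
    ∃ ρ : X → ℝ, Continuous ρ ∧ ∀ M : ℝ, ∃ K : Set X, IsCompact K ∧ {x | ρ x ≤ M} ⊆ K := by
  classical
  set K := CompactExhaustion.choice X with hKdef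
  have hch : ∀ i : ℕ, ∃ u : C(X, ℝ), EqOn u 0 (K i) ∧ EqOn u 1 ((interior (K (i+1)))ᶜ)
      ∧ ∀ x, u x ∈ Icc (0:ℝ) 1 := by
    intro i
    refine exists_continuous_zero_one_of_isClosed (K.isCompact i).isClosed
      isOpen_interior.isClosed_compl ?_
    rw [Set.disjoint_compl_right_iff_subset]
    exact K.subset_interior_succ i
  choose u hu0 hu1 hu01 using hch
  have hmemK : ∀ x : X, ∃ j, x ∈ K j := fun x => by
    have : x ∈ ⋃ n, K n := by rw [K.iUnion_eq]; trivial
    exact mem_iUnion.1 this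
  have hlf : LocallyFinite (fun i : ℕ => Function.support (fun x => u i x)) := by
    intro x
    obtain ⟨j, hj⟩ := hmemK x
    refine ⟨interior (K (j+1)), isOpen_interior.mem_nhds (K.subset_interior_succ j hj), ?_⟩
    apply Set.Finite.subset (Set.finite_Iio (j+1))
    rintro i ⟨y, hy1, hy2⟩
    by_contra hlt
    simp only [Set.mem_Iio, not_lt] at hlt
    exact hy1 (hu0 i (K.subset hlt (interior_subset hy2)))
  set ρ : X → ℝ := fun x => ∑ᶠ i, u i x with hρdef
  have hρc : Continuous ρ := continuous_finsum (fun i => (u i).continuous) hlf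
  have key : ∀ (j : ℕ) (x : X), x ∉ K (j+1) → (j+1 : ℝ) ≤ ρ x := by
    intro j x hx
    have hfin : (Function.support fun i => u i x).Finite := hlf.point_finite x
    have hsub : (Function.support fun i => u i x) ⊆ ↑(hfin.toFinset ∪ Finset.range (j+1)) := by
      intro i hi
      simp only [Finset.coe_union, Set.mem_union, Finset.mem_coe, Set.Finite.mem_toFinset]
      exact Or.inl hi
    rw [hρdef]
    simp only
    rw [finsum_eq_sum_of_support_subset _ hsub]
    have hone : ∀ i ∈ Finset.range (j+1), u i x = 1 := by
      intro i hir
      rw [Finset.mem_range] at hir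
      refine hu1 i ?_
      intro hmem
      exact hx (K.subset (by omega) (interior_subset hmem))
    calc (j+1 : ℝ) = ∑ i ∈ Finset.range (j+1), u i x := by
          rw [Finset.sum_congr rfl hone]; simp
      _ ≤ ∑ i ∈ hfin.toFinset ∪ Finset.range (j+1), u i x := by
          refine Finset.sum_le_sum_of_subset_of_nonneg (Finset.subset_union_right) ?_
          intro i _ _
          exact (hu01 i x).1
  refine ⟨ρ, hρc, ?_⟩
  intro M
  refine ⟨K (Nat.ceil M + 1), K.isCompact _, ?_⟩
  intro x hx
  by_contra hxK
  have h1 := key (Nat.ceil M) x hxK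
  have h2 : (M : ℝ) ≤ Nat.ceil M := Nat.le_ceil M
  have h3 : ρ x ≤ M := hx
  have : (Nat.ceil M : ℝ) + 1 ≤ ρ x := by exact_mod_cast h1
  linarith

/-- Every `n`-dimensional locally compact separable metric space admits a closed
topological embedding into `ℝ^{2n+2}`. -/
theorem closedEmbedding_euclidean_of_locallyCompact {X : Type*} [MetricSpace X]
    [TopologicalSpace.SeparableSpace X] [LocallyCompactSpace X] (n : ℕ)
    (hdim : CovDimLE X n ∧ ∀ m, CovDimLE X m → n ≤ m) :
    ∃ f : X → EuclideanSpace ℝ (Fin (2 * n + 2)), Topology.IsClosedEmbedding f := by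
  classical
  obtain ⟨hdim, -⟩ := hdim
  haveI : SecondCountableTopology X := UniformSpace.secondCountable_of_separable X
  set d : ℕ := 2 * n + 1 with hd
  set B := BoundedContinuousFunction X (Fin d → ℝ) with hB
  set Eset : ℕ → ℕ → Set B := fun i k =>
    {g : B | ∀ x y : X, x ∈ compactCovering X i → y ∈ compactCovering X i →
      1/(k+1 : ℝ) ≤ dist x y → g x ≠ g y} with hEdef
  have hopen : ∀ i k, IsOpen (Eset i k) := by
    intro i k
    rw [Metric.isOpen_iff]
    intro g hg
    by_cases hD : ∃ p : X × X, p.1 ∈ compactCovering X i ∧ p.2 ∈ compactCovering X i ∧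
        1/(k+1 : ℝ) ≤ dist p.1 p.2
    · set D : Set (X × X) := {p | p.1 ∈ compactCovering X i ∧ p.2 ∈ compactCovering X i ∧
        1/(k+1 : ℝ) ≤ dist p.1 p.2} with hDdef
      have hKcl : IsClosed (compactCovering X i) := (isCompact_compactCovering X i).isClosed
      have hDcl : IsClosed D := by
        have : D = (Prod.fst ⁻¹' (compactCovering X i)) ∩ (Prod.snd ⁻¹' (compactCovering X i)) ∩
            {p : X × X | 1/(k+1 : ℝ) ≤ dist p.1 p.2} := by
          ext p
          simp only [hDdef, Set.mem_setOf_eq, Set.mem_inter_iff, Set.mem_preimage, and_assoc]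
        rw [this]
        exact ((hKcl.preimage continuous_fst).inter (hKcl.preimage continuous_snd)).inter
          (isClosed_le continuous_const continuous_dist)
      have hDc : IsCompact D := by
        refine IsCompact.of_isClosed_subset
          ((isCompact_compactCovering X i).prod (isCompact_compactCovering X i)) hDcl ?_
        rintro p ⟨h1, h2, _⟩
        exact ⟨h1, h2⟩
      have hcont : Continuous fun p : X × X => dist (g p.1) (g p.2) :=
        Continuous.dist (g.continuous.comp continuous_fst) (g.continuous.comp continuous_snd)
      obtain ⟨p₀, hp₀D, hp₀min⟩ := hDc.exists_isMinOn ⟨hD.choose, hD.choose_spec⟩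
        hcont.continuousOn
      have hε : 0 < dist (g p₀.1) (g p₀.2) :=
        dist_pos.2 (hg p₀.1 p₀.2 hp₀D.1 hp₀D.2.1 hp₀D.2.2)
      refine ⟨dist (g p₀.1) (g p₀.2) / 2, by positivity, ?_⟩
      intro g' hg'
      rw [Metric.mem_ball] at hg'
      intro x y hx hy hxy heq
      have hmin := hp₀min (show ((x, y) : X × X) ∈ D from ⟨hx, hy, hxy⟩)
      have d1 : dist (g x) (g' x) ≤ dist g g' := BoundedContinuousFunction.dist_coe_le_dist x
      have d2 : dist (g' y) (g y) ≤ dist g' g := BoundedContinuousFunction.dist_coe_le_dist y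
      have d3 : dist (g x) (g y) ≤ dist (g x) (g' x) + dist (g' x) (g' y) + dist (g' y) (g y) :=
        dist_triangle4 _ _ _ _
      rw [heq, dist_self] at d3
      rw [heq] at d1
      rw [dist_comm g g'] at d1
      simp only [Set.mem_setOf_eq] at hmin
      simp only [isMinOn_iff] at hp₀min
      linarith
    · refine ⟨1, one_pos, ?_⟩
      intro g' _
      intro x y hx hy hxy
      exact absurd ⟨(x, y), hx, hy, hxy⟩ hD
  have hdense : ∀ i k, Dense (Eset i k) := by
    intro i k
    rw [Metric.dense_iff]
    intro h r hr
    have hcov : ∀ z : X, ∃ R : ℝ, 0 < R ∧ R ≤ 1/(4*(k+1)) ∧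
        ∀ y ∈ Metric.ball z R, dist (h y) (h z) < r/8 := by
      intro z
      obtain ⟨R₀, hR₀, hR⟩ := Metric.continuous_iff.1 h.continuous z (r/8) (by positivity)
      refine ⟨min R₀ (1/(4*(k+1))), ?_, min_le_right _ _, ?_⟩
      · have h4 : (0:ℝ) < 1/(4*((k:ℝ)+1)) := by positivity
        exact lt_min hR₀ h4
      · intro y hy
        exact hR y (lt_of_lt_of_le hy (min_le_left _ _))
    choose R hR0 hR1 hR2 using hcov
    obtain ⟨𝒱, hVo, hVcov, hVref, hVord⟩ := hdim (Set.range fun z => Metric.ball z (R z))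
      (by rintro U ⟨z, rfl⟩; exact Metric.isOpen_ball)
      (by
        ext x
        simp only [Set.mem_sUnion, Set.mem_univ, iff_true, Set.mem_range]
        exact ⟨Metric.ball x (R x), ⟨x, rfl⟩, Metric.mem_ball_self (hR0 x)⟩)
    obtain ⟨φ, hφsub⟩ := PartitionOfUnity.exists_isSubordinate (ι := ↥𝒱) (s := (univ : Set X))
      isClosed_univ (fun V => (V : Set X)) (fun V => hVo V V.2)
      (by rw [← Set.sUnion_eq_iUnion, hVcov])
    set S : Set ↥𝒱 := {V | (Function.support (φ V)).Nonempty} with hSdef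
    have hScnt : S.Countable := by
      have h1 : LocallyFinite (fun j : ↥S => Function.support (φ (j : ↥𝒱))) :=
        φ.locallyFinite.comp_injective Subtype.val_injective
      have h2 := h1.countable_univ (fun j => j.2)
      have h3 : Countable ↥S := Set.countable_univ_iff.1 h2
      exact Set.countable_coe_iff.1 h3
    obtain ⟨e, he⟩ := Set.countable_iff_exists_injective.1 hScnt
    have hxpt0 : ∀ j : ↥S, ∃ x, x ∈ Function.support (φ (j : ↥𝒱)) := fun j => j.2
    choose xpt hxpt using hxpt0
    have hzc0 : ∀ V : ↥𝒱, ∃ z, (V : Set X) ⊆ Metric.ball z (R z) := by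
      intro V
      obtain ⟨U, hU, hsub⟩ := hVref V V.2
      obtain ⟨z, rfl⟩ := hU
      exact ⟨z, hsub⟩
    choose zc hzc using hzc0
    set c' : ℕ → Fin d → ℝ := fun m =>
      if hm : ∃ j : ↥S, e j = m then h (xpt hm.choose) else 0 with hc'
    obtain ⟨Q, hQd, hQind⟩ := exists_genPos d (by omega) c' (fun _ => r/8) (fun _ => by positivity)
    set q : ↥𝒱 → Fin d → ℝ := fun V => if hV : V ∈ S then Q (e ⟨V, hV⟩) else 0 with hq
    have hqd : ∀ (V : ↥𝒱) (hV : V ∈ S), dist (q V) (h (xpt ⟨V, hV⟩)) < r/8 := by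
      intro V hV
      have hm : ∃ j : ↥S, e j = e ⟨V, hV⟩ := ⟨⟨V, hV⟩, rfl⟩
      have hch : hm.choose = ⟨V, hV⟩ := he hm.choose_spec
      have h1 := hQd (e ⟨V, hV⟩)
      rw [hc'] at h1
      simp only [dif_pos hm] at h1
      rw [hch] at h1
      rw [hq]
      simp only [dif_pos hV]
      exact h1
    set g₀ : X → Fin d → ℝ := fun x => ∑ᶠ V, φ V x • q V with hg₀
    have hg₀c : Continuous g₀ :=
      φ.continuous_finsum_smul (g := fun V _ => q V) (fun V x _ => continuousAt_const)
    have hgTt : ∀ t : X, g₀ t = ∑ V ∈ φ.finsupport t, φ V t • q V := fun t =>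
      (φ.sum_finsupport_smul_eq_finsum (fun V _ => q V)).symm
    have hT1 : ∀ t : X, ∑ V ∈ φ.finsupport t, φ V t = 1 := fun t =>
      φ.sum_finsupport (mem_univ t)
    have hterm : ∀ (t : X), ∀ V ∈ φ.finsupport t, ‖q V - h t‖ ≤ 3*(r/8) := by
      intro t V hV
      have hsup : t ∈ Function.support (φ V) := (φ.mem_finsupport t).1 hV
      have hVS : V ∈ S := ⟨t, hsup⟩
      have htV : t ∈ (V : Set X) := hφsub V (subset_closure hsup)
      have hxptV : (xpt ⟨V, hVS⟩) ∈ (V : Set X) := hφsub V (subset_closure (hxpt ⟨V, hVS⟩))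
      have e1 : dist (q V) (h (xpt ⟨V, hVS⟩)) < r/8 := hqd V hVS
      have e2 : dist (h (xpt ⟨V, hVS⟩)) (h (zc V)) < r/8 := hR2 (zc V) _ (hzc V hxptV)
      have e3 : dist (h t) (h (zc V)) < r/8 := hR2 (zc V) _ (hzc V htV)
      have e3' : dist (h (zc V)) (h t) < r/8 := by rw [dist_comm]; exact e3
      have e4 : dist (q V) (h t) ≤ dist (q V) (h (xpt ⟨V, hVS⟩)) +
          dist (h (xpt ⟨V, hVS⟩)) (h (zc V)) + dist (h (zc V)) (h t) := dist_triangle4 _ _ _ _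
      have : dist (q V) (h t) ≤ 3*(r/8) := by linarith
      rw [dist_eq_norm] at this
      exact this
    have hbound : ∀ x : X, ‖g₀ x - h x‖ ≤ r/2 := by
      intro x
      have hhx : (h x : Fin d → ℝ) = ∑ V ∈ φ.finsupport x, φ V x • h x := by
        rw [← Finset.sum_smul, hT1, one_smul]
      have hdiff : g₀ x - h x = ∑ V ∈ φ.finsupport x, φ V x • (q V - h x) := by
        conv_lhs => rw [hgTt x, hhx]
        rw [← Finset.sum_sub_distrib]
        exact Finset.sum_congr rfl fun V _ => (smul_sub _ _ _).symm
      rw [hdiff]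
      calc ‖∑ V ∈ φ.finsupport x, φ V x • (q V - h x)‖
          ≤ ∑ V ∈ φ.finsupport x, ‖φ V x • (q V - h x)‖ := norm_sum_le _ _
        _ ≤ ∑ V ∈ φ.finsupport x, φ V x * (3*(r/8)) := by
            refine Finset.sum_le_sum fun V hV => ?_
            rw [norm_smul, Real.norm_eq_abs, abs_of_nonneg (φ.nonneg V x)]
            exact mul_le_mul_of_nonneg_left (hterm x V hV) (φ.nonneg V x)
        _ = (∑ V ∈ φ.finsupport x, φ V x) * (3*(r/8)) := by rw [← Finset.sum_mul]
        _ = 3*(r/8) := by rw [hT1, one_mul]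
        _ ≤ r/2 := by linarith
    set Δ : B := BoundedContinuousFunction.ofNormedAddCommGroup (fun x => g₀ x - h x)
      (hg₀c.sub h.continuous) (r/2) hbound with hΔ
    have happly : ∀ t : X, (h + Δ) t = g₀ t := by
      intro t
      have h1 : (h + Δ) t = h t + Δ t := rfl
      have h2 : Δ t = g₀ t - h t := rfl
      rw [h1, h2]
      abel
    refine ⟨h + Δ, ?_, ?_⟩
    · rw [Metric.mem_ball]
      have hd2 : dist (h + Δ) h ≤ r/2 := by
        rw [BoundedContinuousFunction.dist_le (by positivity)]
        intro x
        rw [dist_eq_norm, happly x]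
        have : (g₀ x : Fin d → ℝ) - h x = g₀ x - h x := rfl
        exact hbound x
      linarith
    · intro x y hx hy hxy heq
      rw [happly x, happly y] at heq
      have hTS : ∀ t : X, ∀ V ∈ φ.finsupport t, V ∈ S := by
        intro t V hV
        exact ⟨t, (φ.mem_finsupport t).1 hV⟩
      have hdisj : Disjoint (φ.finsupport x) (φ.finsupport y) := by
        rw [Finset.disjoint_left]
        intro V hVx hVy
        have hx' : x ∈ (V : Set X) := hφsub V (subset_closure ((φ.mem_finsupport x).1 hVx))
        have hy' : y ∈ (V : Set X) := hφsub V (subset_closure ((φ.mem_finsupport y).1 hVy))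
        have hb1 := Metric.mem_ball.1 (hzc V hx')
        have hb2 := Metric.mem_ball.1 (hzc V hy')
        have hRz := hR1 (zc V)
        have htri : dist x y ≤ dist x (zc V) + dist y (zc V) := dist_triangle_right _ _ _
        have hhalf : (1:ℝ)/(2*((k:ℝ)+1)) < 1/((k:ℝ)+1) := by
          rw [div_lt_div_iff₀ (by positivity) (by positivity)]
          nlinarith [Nat.cast_nonneg (α := ℝ) k]
        have : dist x y < 1/(2*((k:ℝ)+1)) := by
          have : dist x y < 2 * (1/(4*((k:ℝ)+1))) := by linarith
          calc dist x y < 2 * (1/(4*((k:ℝ)+1))) := this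
            _ = 1/(2*((k:ℝ)+1)) := by field_simp; ring
        linarith
      have hcardb : ∀ t : X, (φ.finsupport t).card ≤ n + 1 := by
        intro t
        have himg : ↑((φ.finsupport t).image (fun V : ↥𝒱 => (V : Set X))) ⊆
            {V | V ∈ 𝒱 ∧ t ∈ V} := by
          intro W hW
          simp only [Finset.coe_image, Set.mem_image, Finset.mem_coe] at hW
          obtain ⟨V, hV, rfl⟩ := hW
          exact ⟨V.2, hφsub V (subset_closure ((φ.mem_finsupport t).1 hV))⟩
        have h1 := Set.encard_mono himg
        have h2 := hVord t
        rw [Set.encard_coe_eq_coe_finsetCard,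
          Finset.card_image_of_injective _ Subtype.val_injective] at h1
        have h4 : (((φ.finsupport t).card : ℕ) : ℕ∞) ≤ ((n+1 : ℕ) : ℕ∞) := by
          refine le_trans h1 (le_trans h2 ?_)
          push_cast
          rfl
        exact_mod_cast h4
      have key : ∀ (A : Finset ↥𝒱) (v : ↥𝒱 → ℝ), (∀ j ∈ A, j ∈ S) → A.card ≤ d + 1 →
          (∑ j ∈ A, v j) = 0 → (∑ j ∈ A, v j • q j) = 0 → ∀ j ∈ A, v j = 0 := by
        intro A v hAS hAc hv0 hvq j hj
        set em : ↥𝒱 → ℕ := fun W => if hW : W ∈ S then e ⟨W, hW⟩ else 0 with hem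
        have hinj : ∀ a ∈ A, ∀ b ∈ A, em a = em b → a = b := by
          intro a ha b hb hab
          rw [hem] at hab
          simp only [dif_pos (hAS a ha), dif_pos (hAS b hb)] at hab
          exact congrArg Subtype.val (he hab)
        set w' : ℕ → ℝ := fun m => ∑ a ∈ A.filter (fun a => em a = m), v a with hw'
        have hfil : ∀ a ∈ A, A.filter (fun b => em b = em a) = {a} := by
          intro a ha
          ext b
          simp only [Finset.mem_filter, Finset.mem_singleton]
          constructor
          · rintro ⟨hb, hba⟩
            exact hinj b hb a ha hba
          · rintro rfl
            exact ⟨ha, rfl⟩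
        have hw'em : ∀ a ∈ A, w' (em a) = v a := by
          intro a ha
          rw [hw']
          simp only
          rw [hfil a ha, Finset.sum_singleton]
        have hqem : ∀ a ∈ A, q a = Q (em a) := by
          intro a ha
          rw [hq, hem]
          simp only [dif_pos (hAS a ha)]
        have h1 : ∑ m ∈ A.image em, w' m = 0 := by
          rw [Finset.sum_image hinj, Finset.sum_congr rfl hw'em]
          exact hv0
        have h2 : ∑ m ∈ A.image em, w' m • Q m = 0 := by
          rw [Finset.sum_image hinj,
            Finset.sum_congr rfl (fun a ha => by rw [hw'em a ha, ← hqem a ha])]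
          exact hvq
        have h3 := hQind (A.image em) w' (le_trans Finset.card_image_le hAc) h1 h2
        have h4 := h3 (em j) (Finset.mem_image_of_mem em hj)
        rw [hw'em j hj] at h4
        exact h4
      set A := φ.finsupport x ∪ φ.finsupport y with hA
      set v : ↥𝒱 → ℝ := fun V =>
        (if V ∈ φ.finsupport x then φ V x else 0) - (if V ∈ φ.finsupport y then φ V y else 0)
        with hv
      have hAS : ∀ j ∈ A, j ∈ S := by
        intro j hj
        rcases Finset.mem_union.1 hj with hj | hj
        · exact hTS x j hj
        · exact hTS y j hj
      have hAc : A.card ≤ d + 1 := by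
        refine le_trans (Finset.card_union_le _ _) ?_
        have := hcardb x
        have := hcardb y
        omega
      have hsv : ∑ V ∈ A, v V = 0 := by
        rw [hv]
        simp only
        rw [Finset.sum_sub_distrib, Finset.sum_ite_mem, Finset.sum_ite_mem, hA,
          Finset.union_inter_cancel_left, Finset.union_inter_cancel_right, hT1, hT1]
        ring
      have hsq : ∑ V ∈ A, v V • q V = 0 := by
        rw [hv]
        simp only
        have hexp : ∀ V ∈ A, ((if V ∈ φ.finsupport x then φ V x else 0) -
            (if V ∈ φ.finsupport y then φ V y else 0)) • q V =
            (if V ∈ φ.finsupport x then φ V x • q V else 0) -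
            (if V ∈ φ.finsupport y then φ V y • q V else 0) := by
          intro V _
          rw [sub_smul]
          congr 1 <;> · rw [ite_smul, zero_smul]
        rw [Finset.sum_congr rfl hexp, Finset.sum_sub_distrib, Finset.sum_ite_mem,
          Finset.sum_ite_mem, hA, Finset.union_inter_cancel_left,
          Finset.union_inter_cancel_right, ← hgTt x, ← hgTt y, heq]
        ring
      have hxne : (φ.finsupport x).Nonempty := by
        refine Finset.nonempty_of_sum_ne_zero (f := fun V => φ V x) ?_
        rw [hT1]
        exact one_ne_zero
      obtain ⟨V₀, hV₀⟩ := hxne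
      have hres := key A v hAS hAc hsv hsq V₀ (Finset.mem_union_left _ hV₀)
      have hV₀y : V₀ ∉ φ.finsupport y := Finset.disjoint_left.1 hdisj hV₀
      rw [hv] at hres
      simp only [if_pos hV₀, if_neg hV₀y, sub_zero] at hres
      exact Function.mem_support.1 ((φ.mem_finsupport x).1 hV₀) hres
  haveI : CompleteSpace B := inferInstance
  haveI : BaireSpace B := inferInstance
  have hBaire : Dense (⋂ p : ℕ × ℕ, Eset p.1 p.2) :=
    dense_iInter_of_isOpen (fun p => hopen p.1 p.2) (fun p => hdense p.1 p.2)
  obtain ⟨g, hg⟩ := hBaire.nonempty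
  have ginj : Function.Injective g := by
    intro x y hgxy
    by_contra hne
    have hdist : 0 < dist x y := dist_pos.2 hne
    obtain ⟨i₁, hi₁⟩ := exists_mem_compactCovering x
    obtain ⟨i₂, hi₂⟩ := exists_mem_compactCovering y
    obtain ⟨k, hk⟩ := exists_nat_one_div_lt hdist
    have hx : x ∈ compactCovering X (max i₁ i₂) := compactCovering_subset X (le_max_left _ _) hi₁
    have hy : y ∈ compactCovering X (max i₁ i₂) := compactCovering_subset X (le_max_right _ _) hi₂
    have hmem := Set.mem_iInter.1 hg (max i₁ i₂, k)
    exact hmem x y hx hy hk.le hgxy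
  obtain ⟨ρ, hρc, hρp⟩ := exists_proper_real X
  set F₀ : X → (Fin (d+1) → ℝ) := fun x => Fin.snoc (g x) (ρ x) with hF₀
  have hF₀c : Continuous F₀ := by
    refine continuous_pi fun j => ?_
    refine Fin.lastCases ?_ ?_ j
    · simp only [hF₀, Fin.snoc_last]
      exact hρc
    · intro j
      simp only [hF₀, Fin.snoc_castSucc]
      exact (continuous_apply j).comp g.continuous
  have hF₀i : Function.Injective F₀ := by
    intro x y hxy
    refine ginj (funext fun j => ?_)
    have := congrFun hxy j.castSucc
    simpa only [hF₀, Fin.snoc_castSucc] using this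
  have hprop : IsProperMap F₀ := by
    rw [isProperMap_iff_isCompact_preimage]
    refine ⟨hF₀c, fun C hC => ?_⟩
    obtain ⟨M, hM⟩ : ∃ M : ℝ, ∀ v ∈ C, v (Fin.last d) ≤ M := by
      rcases (hC.image (continuous_apply (Fin.last d))).bddAbove with ⟨M, hM⟩
      exact ⟨M, fun v hv => hM (Set.mem_image_of_mem _ hv)⟩
    obtain ⟨Kc, hKc, hKsub⟩ := hρp M
    refine hKc.of_isClosed_subset (hC.isClosed.preimage hF₀c) ?_
    intro x hx
    refine hKsub ?_
    have := hM _ hx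
    simpa only [hF₀, Fin.snoc_last, Set.mem_setOf_eq] using this
  have hclemb : Topology.IsClosedEmbedding F₀ :=
    Topology.IsClosedEmbedding.of_continuous_injective_isClosedMap hF₀c hF₀i hprop.isClosedMap
  have e1 : (Fin (d+1) → ℝ) ≃ₜ EuclideanSpace ℝ (Fin (2*n+2)) :=
    (EuclideanSpace.equiv (Fin (2*n+2)) ℝ).symm.toHomeomorph
  exact ⟨e1 ∘ F₀, e1.isClosedEmbedding.comp hclemb⟩
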